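/- Let R and E be Banach spaces such that the dual R* is isomorphic to E (i.e., there is a bounded linear bijection from R* onto E with bounded inverse). Then the transfinite dual R^(ω²+1) is crudely finitely representable in E. -/

import Mathlib

universe u

/-- An ordinal is *even* if it is `0`, a limit ordinal, or of the form `β + 2n`
with `β` zero or a limit ordinal and `n ∈ ℕ`. -/
def IsEvenOrdinal (α : Ordinal.{0}) : Prop :=
  ∃ (β : Ordinal.{0}) (n : ℕ), (β = 0 ∨ Order.IsSuccLimit β) ∧ α = β + 2 * n

/-- An ordinal is *odd* if it is the successor of an even ordinal. -/
def IsOddOrdinal (γ : Ordinal.{0}) : Prop :=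
  ∃ α : Ordinal.{0}, IsEvenOrdinal α ∧ γ = α + 1

/-- The family `space : Ordinal → Type u` realizes the transfinite duals of `R`:
`space 0` is (isometric to) `R`, `space (α+1)` is (isometric to) the dual of `space α`,
and for an even `γ` the spaces `space β` for even `β < γ` sit inside `space γ` via a
compatible system of isometric embeddings `incl` which on the steps `β ↦ β + 2` is the
canonical embedding of a space into its bidual, and whose ranges have dense union in
`space α` when `α` is a limit ordinal (so `space α` is the completion of the union). -/
def IsTransfiniteDualSystem
    (R : Type u) [NormedAddCommGroup R] [NormedSpace ℝ R] [CompleteSpace R]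
    (space : Ordinal.{0} → Type u)
    [∀ α, NormedAddCommGroup (space α)] [∀ α, NormedSpace ℝ (space α)]
    [∀ α, CompleteSpace (space α)]
    (zeroEquiv : space 0 ≃ₗᵢ[ℝ] R)
    (succEquiv : ∀ α, space (α + 1) ≃ₗᵢ[ℝ] StrongDual ℝ (space α))
    (incl : ∀ β γ, β < γ → IsEvenOrdinal β → IsEvenOrdinal γ → (space β →ₗᵢ[ℝ] space γ)) :
    Prop :=
  (∀ β γ δ (h1 : β < γ) (h2 : γ < δ) (hβ : IsEvenOrdinal β) (hγ : IsEvenOrdinal γ)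
      (hδ : IsEvenOrdinal δ) (x : space β),
      incl γ δ h2 hγ hδ (incl β γ h1 hβ hγ x) = incl β δ (h1.trans h2) hβ hδ x) ∧
  (∀ β (hβ : IsEvenOrdinal β) (h2 : IsEvenOrdinal (β + 1 + 1)) (hlt : β < β + 1 + 1)
      (x : space β),
      incl β (β + 1 + 1) hlt hβ h2 x
        = (succEquiv (β + 1)).symm
            ((NormedSpace.inclusionInDoubleDual ℝ (space β) x).comp
              ((succEquiv β).toContinuousLinearEquiv :
                space (β + 1) →L[ℝ] StrongDual ℝ (space β)))) ∧
  (∀ α (hlim : Order.IsSuccLimit α) (hα : IsEvenOrdinal α),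
      Dense (⋃ (β : Ordinal.{0}) (h : β < α) (hβ : IsEvenOrdinal β),
        Set.range (incl β α h hβ hα)))

/-- `X` is crudely finitely representable in `Y`: there is `C ≥ 1` such that every
finite-dimensional subspace `F ⊆ X` admits a linear map `T : F → Y` with
`‖x‖ ≤ ‖T x‖ ≤ C‖x‖` for all `x ∈ F`. -/
def CrudelyFinitelyRepresentable (X Y : Type*) [NormedAddCommGroup X] [NormedSpace ℝ X]
    [NormedAddCommGroup Y] [NormedSpace ℝ Y] : Prop :=
  ∃ C : ℝ, 1 ≤ C ∧ ∀ F : Subspace ℝ X, FiniteDimensional ℝ F →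
    ∃ T : F →ₗ[ℝ] Y, ∀ x : F, ‖x‖ ≤ ‖T x‖ ∧ ‖T x‖ ≤ C * ‖x‖

open NormedSpace

set_option maxHeartbeats 1600000
set_option synthInstance.maxHeartbeats 400000

section Helpers

variable {X Y W : Type*} [NormedAddCommGroup X] [NormedSpace ℝ X]
  [NormedAddCommGroup Y] [NormedSpace ℝ Y] [NormedAddCommGroup W] [NormedSpace ℝ W]

set_option linter.unusedSectionVars false
set_option linter.unusedVariables false

/-- Finite nets in compact sets. -/
lemma exists_net (s : Set X) (hs : IsCompact s) {δ : ℝ} (hδ : 0 < δ) :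
    ∃ (p : ℕ) (w : Fin p → X), (∀ j, w j ∈ s) ∧ ∀ x ∈ s, ∃ j, ‖x - w j‖ < δ := by
  have htb : TotallyBounded s := hs.totallyBounded
  rw [totallyBounded_iff_subset] at htb
  obtain ⟨t, hts, htf, hcov⟩ := htb {p : X × X | dist p.1 p.2 < δ} (Metric.dist_mem_uniformity hδ)
  lift t to Finset X using htf
  refine ⟨t.card, fun j => (t.equivFin.symm j : X), fun j => hts (t.equivFin.symm j).2, ?_⟩
  intro x hx
  obtain ⟨y, hy, hxy⟩ := Set.mem_iUnion₂.1 (hcov hx)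
  exact ⟨t.equivFin ⟨y, hy⟩, by simpa [Equiv.symm_apply_apply, dist_eq_norm] using hxy⟩

/-- Norm bounds on the unit sphere extend to the whole space by homogeneity. -/
lemma bounds_of_sphere (T : X →ₗ[ℝ] Y) {a b : ℝ} (ha : 0 ≤ a)
    (h : ∀ x : X, ‖x‖ = 1 → a ≤ ‖T x‖ ∧ ‖T x‖ ≤ b) (x : X) :
    a * ‖x‖ ≤ ‖T x‖ ∧ ‖T x‖ ≤ b * ‖x‖ := by
  rcases eq_or_ne x 0 with rfl | hx
  · simp
  · have hnx : (0:ℝ) < ‖x‖ := norm_pos_iff.2 hx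
    have hu : ‖(‖x‖⁻¹ • x)‖ = 1 := by
      rw [norm_smul, norm_inv, norm_norm, inv_mul_cancel₀ hnx.ne']
    obtain ⟨h1, h2⟩ := h _ hu
    have hTu : ‖T (‖x‖⁻¹ • x)‖ = ‖x‖⁻¹ * ‖T x‖ := by
      rw [map_smul, norm_smul, norm_inv, norm_norm]
    rw [hTu] at h1 h2
    constructor
    · calc a * ‖x‖ ≤ (‖x‖⁻¹ * ‖T x‖) * ‖x‖ := by nlinarith
        _ = ‖T x‖ := by field_simp
    · have : ‖T x‖ = (‖x‖⁻¹ * ‖T x‖) * ‖x‖ := by field_simp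
      rw [this]; nlinarith

/-- A norm-one functional nearly attains its norm. -/
lemma exists_norming (f : X →L[ℝ] ℝ) (hf : ‖f‖ = 1) {δ : ℝ} (hδ : 0 < δ) (hδ1 : δ ≤ 1) :
    ∃ z : X, ‖z‖ ≤ 1 ∧ 1 - δ < f z := by
  by_contra h'
  push_neg at h'
  have key : ∀ z : X, ‖f z‖ ≤ (1 - δ) * ‖z‖ := by
    intro z
    rcases eq_or_ne z 0 with rfl | hz
    · simp
    · have hnz : (0:ℝ) < ‖z‖ := norm_pos_iff.2 hz
      have hu : ‖(‖z‖⁻¹ • z)‖ ≤ 1 := by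
        rw [norm_smul, norm_inv, norm_norm, inv_mul_cancel₀ hnz.ne']
      have hun : ‖(-(‖z‖⁻¹ • z))‖ ≤ 1 := by rwa [norm_neg]
      have h1 := h' _ hu
      have h2 := h' _ hun
      rw [map_neg] at h2
      have habs : ‖f (‖z‖⁻¹ • z)‖ ≤ 1 - δ := by
        rw [Real.norm_eq_abs, abs_le]; constructor <;> linarith
      have heq : f (‖z‖⁻¹ • z) = ‖z‖⁻¹ * f z := by rw [map_smul]; simp
      rw [heq, Real.norm_eq_abs, abs_mul, abs_inv, abs_norm] at habs
      rw [Real.norm_eq_abs]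
      calc |f z| = ‖z‖ * (‖z‖⁻¹ * |f z|) := by field_simp
        _ ≤ ‖z‖ * (1 - δ) := by nlinarith [abs_nonneg (f z), hnz.le]
        _ = (1 - δ) * ‖z‖ := mul_comm _ _
  have : ‖f‖ ≤ 1 - δ := f.opNorm_le_bound (by linarith) key
  rw [hf] at this; linarith

/-- `(1+ε)`-finite-representability of `X` in `Y` for every `ε > 0`. -/
def FinRep (X Y : Type*) [NormedAddCommGroup X] [NormedSpace ℝ X]
    [NormedAddCommGroup Y] [NormedSpace ℝ Y] : Prop :=
  ∀ ε : ℝ, 0 < ε → ∀ F : Subspace ℝ X, FiniteDimensional ℝ F →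
    ∃ T : F →ₗ[ℝ] Y, ∀ x : F, (1 - ε) * ‖x‖ ≤ ‖T x‖ ∧ ‖T x‖ ≤ (1 + ε) * ‖x‖

lemma finRep_of_isometric (Ψ : X →ₗ[ℝ] Y) (h : ∀ x, ‖Ψ x‖ = ‖x‖) : FinRep X Y := by
  intro ε hε F _
  refine ⟨Ψ.comp F.subtype, fun x => ?_⟩
  have heq : ‖Ψ.comp F.subtype x‖ = ‖x‖ := by
    simp only [LinearMap.comp_apply, Submodule.subtype_apply, h, Submodule.coe_norm]
  rw [heq]
  have := norm_nonneg x
  constructor <;> nlinarith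

/-- Composing a linear map with two-sided norm bounds with a `FinRep`. -/
lemma exists_comp {F : Subspace ℝ X} [FiniteDimensional ℝ F]
    (T : F →ₗ[ℝ] Y) (hY : FinRep Y W) {a b δ : ℝ} (ha : 0 ≤ a) (hδ : 0 < δ) (hδ1 : δ ≤ 1)
    (hT : ∀ x : F, a * ‖x‖ ≤ ‖T x‖ ∧ ‖T x‖ ≤ b * ‖x‖) :
    ∃ T' : F →ₗ[ℝ] W, ∀ x : F, (1 - δ) * a * ‖x‖ ≤ ‖T' x‖ ∧ ‖T' x‖ ≤ (1 + δ) * b * ‖x‖ := by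
  set G : Subspace ℝ Y := LinearMap.range T with hG
  obtain ⟨S, hS⟩ := hY δ hδ G inferInstance
  refine ⟨S.comp (T.codRestrict G fun x => LinearMap.mem_range_self T x), fun x => ?_⟩
  set y : G := T.codRestrict G (fun x => LinearMap.mem_range_self T x) x with hy
  have hyn : ‖y‖ = ‖T x‖ := by rw [Submodule.coe_norm]; rfl
  obtain ⟨hs1, hs2⟩ := hS y
  obtain ⟨ht1, ht2⟩ := hT x
  rw [hyn] at hs1 hs2
  have hx0 := norm_nonneg x
  have hTx0 := norm_nonneg (T x)
  constructor
  · calc (1 - δ) * a * ‖x‖ ≤ (1 - δ) * ‖T x‖ := by nlinarith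
      _ ≤ ‖S y‖ := hs1
      _ = ‖(S.comp (T.codRestrict G fun x => LinearMap.mem_range_self T x)) x‖ := rfl
  · calc ‖(S.comp (T.codRestrict G fun x => LinearMap.mem_range_self T x)) x‖ = ‖S y‖ := rfl
      _ ≤ (1 + δ) * ‖T x‖ := hs2
      _ ≤ (1 + δ) * b * ‖x‖ := by nlinarith

lemma FinRep.trans (h1 : FinRep X Y) (h2 : FinRep Y W) : FinRep X W := by
  intro ε hε F hF
  set δ : ℝ := min (ε / 3) (1 / 2) with hδdef
  have hδ : 0 < δ := lt_min (by linarith) (by norm_num)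
  have hδ1 : δ ≤ 1 := le_trans (min_le_right _ _) (by norm_num)
  have hδε : 3 * δ ≤ ε := by
    have := min_le_left (ε / 3) (1/2 : ℝ); linarith
  obtain ⟨T, hT⟩ := h1 δ hδ F hF
  have h1δ : (0:ℝ) ≤ 1 - δ := by linarith
  obtain ⟨T', hT'⟩ := exists_comp T h2 h1δ hδ hδ1 hT
  refine ⟨T', fun x => ?_⟩
  obtain ⟨ha, hb⟩ := hT' x
  have hx0 := norm_nonneg x
  constructor
  · calc (1 - ε) * ‖x‖ ≤ (1 - δ) * (1 - δ) * ‖x‖ := by nlinarith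
      _ ≤ ‖T' x‖ := ha
  · calc ‖T' x‖ ≤ (1 + δ) * (1 + δ) * ‖x‖ := hb
      _ ≤ (1 + ε) * ‖x‖ := by nlinarith

/-- The isometric map `Dual A → Dual B` induced by an isometric equivalence `A ≃ B`. -/
noncomputable def dualCongrMap {A B : Type*} [NormedAddCommGroup A] [NormedSpace ℝ A]
    [NormedAddCommGroup B] [NormedSpace ℝ B] (e : A ≃ₗᵢ[ℝ] B) :
    StrongDual ℝ A →ₗ[ℝ] StrongDual ℝ B where
  toFun f := f.comp e.symm.toLinearIsometry.toContinuousLinearMap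
  map_add' f g := ContinuousLinearMap.add_comp _ _ _
  map_smul' c f := ContinuousLinearMap.smul_comp _ _ _

lemma norm_dualCongrMap {A B : Type*} [NormedAddCommGroup A] [NormedSpace ℝ A]
    [NormedAddCommGroup B] [NormedSpace ℝ B] (e : A ≃ₗᵢ[ℝ] B) (f : StrongDual ℝ A) :
    ‖dualCongrMap e f‖ = ‖f‖ := by
  apply le_antisymm
  · apply ContinuousLinearMap.opNorm_le_bound _ (norm_nonneg f)
    intro x
    have : ‖f (e.symm x)‖ ≤ ‖f‖ * ‖e.symm x‖ := f.le_opNorm _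
    simpa [dualCongrMap, e.symm.norm_map] using this
  · apply ContinuousLinearMap.opNorm_le_bound _ (norm_nonneg _)
    intro x
    have h1 : f x = (dualCongrMap e f) (e x) := by simp [dualCongrMap]
    rw [h1]
    calc ‖(dualCongrMap e f) (e x)‖ ≤ ‖dualCongrMap e f‖ * ‖e x‖ :=
          ContinuousLinearMap.le_opNorm _ _
      _ = ‖dualCongrMap e f‖ * ‖x‖ := by rw [e.norm_map]

end Helpers

section Ordinals

lemma isEven_zero : IsEvenOrdinal 0 := ⟨0, 0, Or.inl rfl, by simp⟩

lemma isEven_of_limit {β : Ordinal.{0}} (h : Order.IsSuccLimit β) : IsEvenOrdinal β :=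
  ⟨β, 0, Or.inr h, by simp⟩

lemma two_mul_succ (m : ℕ) :
    (2:Ordinal.{0}) * ((m+1:ℕ) : Ordinal.{0}) = 2 * (m : Ordinal.{0}) + 2 := by
  push_cast
  rw [mul_add, mul_one]

lemma isEven_succ_succ {γ : Ordinal.{0}} (h : IsEvenOrdinal γ) : IsEvenOrdinal (γ + 1 + 1) := by
  obtain ⟨l, n, hl, rfl⟩ := h
  refine ⟨l, n + 1, hl, ?_⟩
  rw [two_mul_succ, ← add_assoc,
    show (2:Ordinal.{0}) = 1 + 1 from (one_add_one_eq_two).symm, ← add_assoc]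

lemma isEven_cases {b : Ordinal.{0}} (h : IsEvenOrdinal b) :
    b = 0 ∨ Order.IsSuccLimit b ∨ ∃ g, IsEvenOrdinal g ∧ g < b ∧ b = g + 1 + 1 := by
  obtain ⟨l, n, hl, rfl⟩ := h
  cases n with
  | zero =>
    simp only [Nat.cast_zero, mul_zero, add_zero]
    rcases hl with h0 | hlim
    · exact Or.inl h0
    · exact Or.inr (Or.inl hlim)
  | succ m =>
    right; right
    refine ⟨l + 2 * m, ⟨l, m, hl, rfl⟩, ?_, ?_⟩
    · rw [two_mul_succ, ← add_assoc]
      exact lt_add_of_pos_right _ (by norm_num)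
    · rw [two_mul_succ, ← add_assoc,
        show (2:Ordinal.{0}) = 1 + 1 from (one_add_one_eq_two).symm, ← add_assoc]

end Ordinals

section LocalReflexivity

set_option maxHeartbeats 1600000
set_option synthInstance.maxHeartbeats 400000
set_option linter.unusedVariables false
set_option linter.unusedSectionVars false

variable {Z : Type*} [NormedAddCommGroup Z] [NormedSpace ℝ Z]

/-- General near-norming elements for continuous functionals. -/
lemma exists_norming' (h : Z →L[ℝ] ℝ) {η : ℝ} (hη : 0 < η) :
    ∃ z : Z, ‖z‖ ≤ 1 ∧ ‖h‖ - η < h z := by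
  by_contra hc
  push_neg at hc
  have h0 : 0 ≤ ‖h‖ - η := by
    by_contra h0'
    push_neg at h0'
    have := hc 0 (by simp)
    rw [map_zero] at this
    linarith
  have key : ∀ z : Z, ‖h z‖ ≤ (‖h‖ - η) * ‖z‖ := by
    intro z
    rcases eq_or_ne z 0 with rfl | hz
    · simp
    · have hnz : (0:ℝ) < ‖z‖ := norm_pos_iff.2 hz
      have hu : ‖(‖z‖⁻¹ • z)‖ ≤ 1 := by
        rw [norm_smul, norm_inv, norm_norm, inv_mul_cancel₀ hnz.ne']
      have h1 := hc _ hu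
      have h2 := hc _ (by rwa [norm_neg] : ‖(-(‖z‖⁻¹ • z))‖ ≤ 1)
      rw [map_neg] at h2
      have habs : |h (‖z‖⁻¹ • z)| ≤ ‖h‖ - η := abs_le.2 ⟨by linarith, by linarith⟩
      have heq : h (‖z‖⁻¹ • z) = ‖z‖⁻¹ * h z := by rw [map_smul]; simp
      rw [heq, abs_mul, abs_inv, abs_norm] at habs
      rw [Real.norm_eq_abs]
      calc |h z| = ‖z‖ * (‖z‖⁻¹ * |h z|) := by field_simp
        _ ≤ ‖z‖ * (‖h‖ - η) := by nlinarith [abs_nonneg (h z), hnz.le]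
        _ = (‖h‖ - η) * ‖z‖ := mul_comm _ _
  have := h.opNorm_le_bound h0 key
  linarith


noncomputable def combo {n : ℕ} (a : Fin n → ℝ) : (Fin n → Z) →L[ℝ] Z :=
  ∑ k, a k • (ContinuousLinearMap.proj k : (Fin n → Z) →L[ℝ] Z)

lemma combo_apply {n : ℕ} (a : Fin n → ℝ) (x : Fin n → Z) :
    combo a x = ∑ k, a k • x k := by
  simp [combo, ContinuousLinearMap.sum_apply]


lemma clm_pi_expansion {ι : Type*} [Fintype ι] [DecidableEq ι]
    (φ : (ι → ℝ) →L[ℝ] ℝ) (y : ι → ℝ) :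
    φ y = ∑ i, y i * φ (Pi.single i 1) := by
  conv_lhs => rw [← Finset.univ_sum_single y]
  rw [map_sum]
  congr 1
  ext i
  have h1 : (Pi.single i (y i) : ι → ℝ) = y i • (Pi.single i (1:ℝ) : ι → ℝ) := by
    rw [← Pi.single_smul]
    simp
  rw [h1, map_smul, smul_eq_mul]


lemma lr_sep {n p q : ℕ} (g : Fin p → StrongDual ℝ Z) (v : Fin n → StrongDual ℝ (StrongDual ℝ Z))
    (A : Fin q → Fin n → ℝ)
    (hA : ∀ i, ‖∑ k, A i k • v k‖ ≤ 1)
    {δ : ℝ} (hδ : 0 < δ) :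
    (fun jk : Fin p × Fin n => v jk.2 (g jk.1)) ∈
      closure ((fun (x : Fin n → Z) (jk : Fin p × Fin n) => g jk.1 (x jk.2)) ''
        {x : Fin n → Z | ∀ i, ‖∑ k, A i k • x k‖ ≤ 1 + δ}) := by
  classical
  set Φfun : (Fin n → Z) → (Fin p × Fin n → ℝ) :=
    fun x jk => g jk.1 (x jk.2) with hΦfun
  set C : Set (Fin n → Z) := {x : Fin n → Z | ∀ i, ‖∑ k, A i k • x k‖ ≤ 1 + δ} with hC
  set c : Fin p × Fin n → ℝ := fun jk => v jk.2 (g jk.1) with hc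
  by_contra hcon
  -- linearity of Φfun
  have hΦlin : IsLinearMap ℝ Φfun := by
    constructor
    · intro x y; funext jk; simp [hΦfun]
    · intro r x; funext jk; simp [hΦfun]
  -- the combination operator into `Fin q → Z`
  set L : (Fin n → Z) →L[ℝ] (Fin q → Z) :=
    ContinuousLinearMap.pi (fun i => combo (A i)) with hL
  have hLx : ∀ (x : Fin n → Z) (i : Fin q), L x i = ∑ k, A i k • x k := by
    intro x i; simp [hL, combo_apply]
  have hCL : ∀ x : Fin n → Z, x ∈ C ↔ ‖L x‖ ≤ 1 + δ := by
    intro x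
    rw [pi_norm_le_iff_of_nonneg (by linarith : (0:ℝ) ≤ 1 + δ)]
    constructor
    · intro hx i; rw [hLx]; exact hx i
    · intro hx i; have := hx i; rwa [hLx] at this
  -- convexity of C
  have hCconv : Convex ℝ C := by
    intro x hx y hy a b ha hb hab
    intro i
    have hx' := hx i
    have hy' := hy i
    have hsum : ∑ k, A i k • (a • x + b • y) k
        = a • (∑ k, A i k • x k) + b • (∑ k, A i k • y k) := by
      rw [Finset.smul_sum, Finset.smul_sum, ← Finset.sum_add_distrib]
      refine Finset.sum_congr rfl fun k _ => ?_
      simp only [Pi.add_apply, Pi.smul_apply, smul_add]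
      rw [smul_comm (A i k) a, smul_comm (A i k) b]
    show ‖∑ k, A i k • (a • x + b • y) k‖ ≤ 1 + δ
    rw [hsum]
    calc ‖a • (∑ k, A i k • x k) + b • (∑ k, A i k • y k)‖
        ≤ ‖a • (∑ k, A i k • x k)‖ + ‖b • (∑ k, A i k • y k)‖ := norm_add_le _ _
      _ = a * ‖∑ k, A i k • x k‖ + b * ‖∑ k, A i k • y k‖ := by
          rw [norm_smul, norm_smul, Real.norm_eq_abs, Real.norm_eq_abs,
            abs_of_nonneg ha, abs_of_nonneg hb]
      _ ≤ a * (1 + δ) + b * (1 + δ) := by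
          have := mul_le_mul_of_nonneg_left hx' ha
          have := mul_le_mul_of_nonneg_left hy' hb
          linarith
      _ = 1 + δ := by rw [← add_mul, hab, one_mul]
  -- separation
  have hSconv : Convex ℝ (closure (Φfun '' C)) := (hCconv.is_linear_image hΦlin).closure
  obtain ⟨φ, u, hφS, hφc⟩ :=
    geometric_hahn_banach_closed_point hSconv isClosed_closure hcon
  set t : Fin p × Fin n → ℝ := fun jk => φ (Pi.single jk 1) with ht
  have hφexp : ∀ y : Fin p × Fin n → ℝ, φ y = ∑ jk, y jk * t jk := fun y =>
    clm_pi_expansion φ y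
  have hmemS : ∀ x ∈ C, φ (Φfun x) < u := fun x hx =>
    hφS _ (subset_closure (Set.mem_image_of_mem _ hx))
  have h0C : (0 : Fin n → Z) ∈ C := by
    intro i
    show ‖∑ k, A i k • (0 : Fin n → Z) k‖ ≤ 1 + δ
    simp; linarith
  have hu0 : 0 < u := by
    have := hmemS 0 h0C
    have hΦ0 : Φfun 0 = 0 := hΦlin.mk' Φfun |>.map_zero
    rwa [hΦ0, map_zero] at this
  set M' : ℝ := u / (1 + δ) with hM'
  have hM'0 : 0 ≤ M' := by positivity
  -- scaling bound
  have hψle : ∀ x : Fin n → Z, φ (Φfun x) ≤ M' * ‖L x‖ := by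
    intro x
    have hlin : ∀ r : ℝ, φ (Φfun (r • x)) = r * φ (Φfun x) := by
      intro r
      rw [hΦlin.map_smul, map_smul, smul_eq_mul]
    rcases eq_or_lt_of_le (norm_nonneg (L x)) with h0 | hpos
    · have hLz : ‖L x‖ = 0 := h0.symm
      have hall : ∀ r : ℝ, 0 < r → r * φ (Φfun x) < u := by
        intro r hr
        rw [← hlin]
        apply hmemS
        apply (hCL _).2
        rw [map_smul, norm_smul, hLz, mul_zero]
        linarith
      have hle0 : φ (Φfun x) ≤ 0 := by
        by_contra hpos'
        push_neg at hpos'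
        have := hall (u / φ (Φfun x)) (by positivity)
        rw [div_mul_cancel₀ _ (ne_of_gt hpos')] at this
        exact lt_irrefl u this
      rw [hLz, mul_zero]; exact hle0
    · set r : ℝ := (1 + δ) / ‖L x‖ with hr'
      have hr : 0 < r := by positivity
      have hmem : r • x ∈ C := by
        apply (hCL _).2
        rw [map_smul, norm_smul, Real.norm_eq_abs, abs_of_pos hr, hr']
        rw [div_mul_cancel₀ _ (ne_of_gt hpos)]
      have hlt := hmemS _ hmem
      rw [hlin] at hlt
      have hstep : φ (Φfun x) ≤ u / r := by
        rw [le_div_iff₀ hr, mul_comm]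
        exact le_of_lt hlt
      have hfin : u / r = M' * ‖L x‖ := by
        rw [hM', hr']
        field_simp
      rw [hfin] at hstep
      exact hstep
  
  -- factor through the range of L
  set Lm : (Fin n → Z) →ₗ[ℝ] (Fin q → Z) := L.toLinearMap with hLm
  set ψlin : (Fin n → Z) →ₗ[ℝ] ℝ := (φ.toLinearMap).comp (hΦlin.mk' Φfun) with hψlin
  have hψlin_apply : ∀ x, ψlin x = φ (Φfun x) := fun x => rfl
  have hψlin_le : ∀ x, ψlin x ≤ M' * ‖L x‖ := fun x => by rw [hψlin_apply]; exact hψle x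
  have hker : LinearMap.ker Lm ≤ LinearMap.ker ψlin := by
    intro x hx
    rw [LinearMap.mem_ker] at hx ⊢
    have hLx0 : L x = 0 := hx
    have h1 : ψlin x ≤ 0 := by
      have := hψlin_le x; rwa [hLx0, norm_zero, mul_zero] at this
    have h2 : ψlin (-x) ≤ 0 := by
      have h2' := hψlin_le (-x)
      have hLneg : L (-x) = 0 := by rw [map_neg, hLx0, neg_zero]
      rwa [hLneg, norm_zero, mul_zero] at h2'
    rw [map_neg] at h2
    linarith
  set ψbar : LinearMap.range Lm →ₗ[ℝ] ℝ :=
    ((LinearMap.ker Lm).liftQ ψlin hker).comp (Lm.quotKerEquivRange.symm.toLinearMap)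
    with hψbar
  have hψbar_apply : ∀ (x : Fin n → Z) (h : Lm x ∈ LinearMap.range Lm),
      ψbar ⟨Lm x, h⟩ = ψlin x := by
    intro x h
    rw [hψbar]
    simp only [LinearMap.comp_apply, LinearEquiv.coe_coe]
    rw [Lm.quotKerEquivRange_symm_apply_image x h, Submodule.mkQ_apply, Submodule.liftQ_apply]
  have hψbarle : ∀ s : LinearMap.range Lm, ψbar s ≤ M' * ‖(s : Fin q → Z)‖ := by
    rintro ⟨y, hy⟩
    obtain ⟨x, rfl⟩ := hy
    rw [hψbar_apply x (LinearMap.mem_range_self _ x)]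
    exact hψlin_le x
  -- Hahn-Banach extension dominated by M' * ‖·‖
  obtain ⟨ψhat, hext, hdom⟩ :=
    exists_extension_of_le_sublinear ⟨LinearMap.range Lm, ψbar⟩ (fun w => M' * ‖w‖)
      (fun r hr w => by
        show M' * ‖r • w‖ = r * (M' * ‖w‖)
        rw [norm_smul, Real.norm_eq_abs, abs_of_pos hr]; ring)
      (fun w1 w2 => by
        show M' * ‖w1 + w2‖ ≤ M' * ‖w1‖ + M' * ‖w2‖
        nlinarith [mul_le_mul_of_nonneg_left (norm_add_le w1 w2) hM'0])
      hψbarle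
  have hψhat_abs : ∀ w, |ψhat w| ≤ M' * ‖w‖ := by
    intro w
    refine abs_le.2 ⟨?_, hdom w⟩
    have := hdom (-w)
    rw [map_neg, norm_neg] at this
    linarith
  -- coordinate functionals
  have hsingle_norm : ∀ (i : Fin q) (z : Z), ‖(Pi.single i z : Fin q → Z)‖ ≤ ‖z‖ := by
    intro i z
    refine (pi_norm_le_iff_of_nonneg (norm_nonneg z)).2 fun m => ?_
    rcases eq_or_ne m i with rfl | hmi
    · rw [Pi.single_eq_same]
    · rw [Pi.single_eq_of_ne hmi, norm_zero]; exact norm_nonneg z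
  set χlin : Fin q → (Z →ₗ[ℝ] ℝ) := fun i =>
    { toFun := fun z => ψhat (Pi.single i z)
      map_add' := fun z1 z2 => by rw [← map_add, ← Pi.single_add]
      map_smul' := fun r z => by
        rw [RingHom.id_apply, ← map_smul, ← Pi.single_smul] } with hχlin
  set χ : Fin q → StrongDual ℝ Z := fun i => (χlin i).mkContinuous M' (fun z => by
    rw [Real.norm_eq_abs]
    calc |χlin i z| = |ψhat (Pi.single i z)| := rfl
      _ ≤ M' * ‖(Pi.single i z : Fin q → Z)‖ := hψhat_abs _
      _ ≤ M' * ‖z‖ := mul_le_mul_of_nonneg_left (hsingle_norm i z) hM'0) with hχ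
  have hχapply : ∀ i z, χ i z = ψhat (Pi.single i z) := fun i z => rfl
  have hdecomp : ∀ w : Fin q → Z, ψhat w = ∑ i, χ i (w i) := by
    intro w
    conv_lhs => rw [← Finset.univ_sum_single w]
    rw [map_sum]
    exact Finset.sum_congr rfl fun i _ => (hχapply i (w i)).symm
  have hχsum : ∑ i, ‖χ i‖ ≤ M' := by
    refine le_of_forall_pos_le_add fun η hη => ?_
    set η' : ℝ := η / (q + 1) with hη'def
    have hη' : 0 < η' := by positivity
    have hz : ∀ i : Fin q, ∃ z, ‖z‖ ≤ 1 ∧ ‖χ i‖ - η' < χ i z :=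
      fun i => exists_norming' (χ i) hη'
    choose zf hz1 hz2 using hz
    have hU : ‖(zf : Fin q → Z)‖ ≤ 1 := (pi_norm_le_iff_of_nonneg zero_le_one).2 hz1
    have h1 : ψhat zf ≤ M' := by
      have hd := hdom zf
      nlinarith [mul_le_mul_of_nonneg_left hU hM'0]
    have h2 : ∑ i, (‖χ i‖ - η') ≤ ∑ i, χ i (zf i) :=
      Finset.sum_le_sum fun i _ => (hz2 i).le
    rw [← hdecomp] at h2
    have h3 : ∑ i, (‖χ i‖ - η') = (∑ i, ‖χ i‖) - q * η' := by
      rw [Finset.sum_sub_distrib, Finset.sum_const, Finset.card_univ, Fintype.card_fin,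
        nsmul_eq_mul]
    have hqη : (q:ℝ) * η' ≤ η := by
      rw [hη'def]
      have hq1 : (q:ℝ) ≤ q + 1 := by linarith
      calc (q:ℝ) * (η / (q+1)) ≤ (q+1) * (η / (q+1)) := by
            apply mul_le_mul_of_nonneg_right hq1 (by positivity)
        _ = η := by field_simp
    linarith
  
  -- agreement of ψhat with φ ∘ Φfun
  have hφΦ : ∀ x : Fin n → Z, φ (Φfun x) = ψhat (L x) := by
    intro x
    have hmem : Lm x ∈ LinearMap.range Lm := LinearMap.mem_range_self _ x
    have he' : ψhat (Lm x) = ψbar ⟨Lm x, hmem⟩ := hext ⟨Lm x, hmem⟩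
    have hb : ψbar ⟨Lm x, hmem⟩ = ψlin x := hψbar_apply x hmem
    calc φ (Φfun x) = ψlin x := (hψlin_apply x).symm
      _ = ψbar ⟨Lm x, hmem⟩ := hb.symm
      _ = ψhat (Lm x) := he'.symm
      _ = ψhat (L x) := rfl
  -- pointwise identity for the coefficients
  have hstar : ∀ (k : Fin n) (z : Z),
      ∑ j, t (j, k) * g j z = ∑ i, A i k * χ i z := by
    intro k z
    have h1 : φ (Φfun (Pi.single k z)) = ∑ j, t (j, k) * g j z := by
      rw [hφexp, Fintype.sum_prod_type]
      refine Finset.sum_congr rfl fun j _ => ?_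
      rw [Finset.sum_eq_single k]
      · show Φfun (Pi.single k z) (j, k) * t (j, k) = t (j, k) * g j z
        have : Φfun (Pi.single k z) (j, k) = g j z := by
          show g j ((Pi.single k z : Fin n → Z) k) = g j z
          rw [Pi.single_eq_same]
        rw [this, mul_comm]
      · intro k' _ hk'
        have : Φfun (Pi.single k z) (j, k') = 0 := by
          show g j ((Pi.single k z : Fin n → Z) k') = 0
          rw [Pi.single_eq_of_ne hk', map_zero]
        rw [this, zero_mul]
      · intro hk; exact absurd (Finset.mem_univ k) hk
    have h2 : ψhat (L (Pi.single k z)) = ∑ i, A i k * χ i z := by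
      rw [hdecomp]
      refine Finset.sum_congr rfl fun i _ => ?_
      have hcoord : L (Pi.single k z) i = A i k • z := by
        rw [hLx, Finset.sum_eq_single k]
        · rw [Pi.single_eq_same]
        · intro k' _ hk'; rw [Pi.single_eq_of_ne hk', smul_zero]
        · intro hk; exact absurd (Finset.mem_univ k) hk
      rw [hcoord, map_smul, smul_eq_mul]
    rw [← h1, ← h2, hφΦ]
  -- equality of functionals in `StrongDual ℝ Z`
  have hgeq : ∀ k, (∑ j, t (j, k) • g j : StrongDual ℝ Z) = ∑ i, A i k • χ i := by
    intro k
    ext z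
    rw [ContinuousLinearMap.sum_apply, ContinuousLinearMap.sum_apply]
    have h1 : ∀ j, (t (j, k) • g j) z = t (j, k) * g j z := fun j => rfl
    have h2 : ∀ i, (A i k • χ i) z = A i k * χ i z := fun i => rfl
    simp only [h1, h2]
    exact hstar k z
  -- compute φ c and derive the contradiction
  have hcval : φ c = ∑ k, v k (∑ j, t (j, k) • g j) := by
    rw [hφexp, Fintype.sum_prod_type, Finset.sum_comm]
    refine Finset.sum_congr rfl fun k _ => ?_
    rw [map_sum]
    refine Finset.sum_congr rfl fun j _ => ?_
    rw [map_smul, smul_eq_mul]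
    show c (j, k) * t (j, k) = t (j, k) * v k (g j)
    rw [mul_comm]
  have hfinal : φ c ≤ M' := by
    rw [hcval]
    calc ∑ k, v k (∑ j, t (j, k) • g j) = ∑ k, v k (∑ i, A i k • χ i) := by
          refine Finset.sum_congr rfl fun k _ => ?_
          rw [hgeq]
      _ = ∑ k, ∑ i, A i k * v k (χ i) := by
          refine Finset.sum_congr rfl fun k _ => ?_
          rw [map_sum]
          refine Finset.sum_congr rfl fun i _ => ?_
          rw [map_smul, smul_eq_mul]
      _ = ∑ i, ∑ k, A i k * v k (χ i) := Finset.sum_comm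
      _ = ∑ i, (∑ k, A i k • v k) (χ i) := by
          refine Finset.sum_congr rfl fun i _ => ?_
          rw [ContinuousLinearMap.sum_apply]
          refine Finset.sum_congr rfl fun k _ => ?_
          rfl
      _ ≤ ∑ i, ‖χ i‖ := by
          refine Finset.sum_le_sum fun i _ => ?_
          calc (∑ k, A i k • v k) (χ i) ≤ |(∑ k, A i k • v k) (χ i)| := le_abs_self _
            _ ≤ ‖∑ k, A i k • v k‖ * ‖χ i‖ := by
                have := ContinuousLinearMap.le_opNorm (∑ k, A i k • v k) (χ i)
                rwa [Real.norm_eq_abs] at this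
            _ ≤ 1 * ‖χ i‖ := mul_le_mul_of_nonneg_right (hA i) (norm_nonneg _)
            _ = ‖χ i‖ := one_mul _
      _ ≤ M' := hχsum
  have hMu : M' < u := by
    rw [hM', div_lt_iff₀ (by linarith : (0:ℝ) < 1 + δ)]
    nlinarith
  linarith


lemma lr_exists {n p q : ℕ} (g : Fin p → StrongDual ℝ Z) (v : Fin n → StrongDual ℝ (StrongDual ℝ Z))
    (A : Fin q → Fin n → ℝ) (hA : ∀ i, ‖∑ k, A i k • v k‖ ≤ 1)
    {δ : ℝ} (hδ : 0 < δ) :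
    ∃ x : Fin n → Z, (∀ j k, g j (x k) = v k (g j)) ∧
      (∀ i, ‖∑ k, A i k • x k‖ ≤ 1 + δ) := by
  classical
  set Φlm : (Fin n → Z) →ₗ[ℝ] (Fin p × Fin n → ℝ) :=
    { toFun := fun x jk => g jk.1 (x jk.2)
      map_add' := fun x y => by funext jk; simp
      map_smul' := fun r x => by funext jk; simp } with hΦlm
  set c : Fin p × Fin n → ℝ := fun jk => v jk.2 (g jk.1) with hcdef
  set V : Submodule ℝ (Fin p × Fin n → ℝ) := LinearMap.range Φlm with hV
  have hVclosed : IsClosed (V : Set (Fin p × Fin n → ℝ)) :=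
    Submodule.closed_of_finiteDimensional V
  have hcc := lr_sep g v A hA (half_pos hδ)
  have hcV : c ∈ V := by
    have hsub : ((fun (x : Fin n → Z) (jk : Fin p × Fin n) => g jk.1 (x jk.2)) ''
        {x : Fin n → Z | ∀ i, ‖∑ k, A i k • x k‖ ≤ 1 + δ/2}) ⊆ (V : Set _) := by
      rintro y ⟨x, _, rfl⟩
      exact ⟨x, rfl⟩
    have := closure_mono hsub hcc
    rwa [hVclosed.closure_eq] at this
  set bV := Module.finBasis ℝ V with hbV
  have hpre : ∀ l, ∃ x : Fin n → Z, Φlm x = (bV l : Fin p × Fin n → ℝ) := fun l => (bV l).2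
  choose xpre hxpre using hpre
  set Lin : V →ₗ[ℝ] (Fin n → Z) := Module.Basis.constr bV ℝ xpre with hLinDef
  have hLin : ∀ s : V, Φlm (Lin s) = (s : Fin p × Fin n → ℝ) := by
    intro s
    have hcomp : Φlm.comp Lin = V.subtype := by
      apply bV.ext
      intro l
      rw [LinearMap.comp_apply, hLinDef, Module.Basis.constr_basis, hxpre]
      rfl
    calc Φlm (Lin s) = (Φlm.comp Lin) s := rfl
      _ = V.subtype s := by rw [hcomp]
      _ = (s : Fin p × Fin n → ℝ) := rfl
  set LinC : V →L[ℝ] (Fin n → Z) := LinearMap.toContinuousLinearMap Lin with hLinC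
  set RL : ℝ := ‖LinC‖ with hRL
  have hRL0 : 0 ≤ RL := by rw [hRL]; exact norm_nonneg LinC
  set RK : ℝ := (∑ i, ∑ k, |A i k|) + 1 with hRKdef
  have hRKsum : 0 ≤ ∑ i, ∑ k, |A i k| :=
    Finset.sum_nonneg fun i _ => Finset.sum_nonneg fun k _ => abs_nonneg _
  have hRK0 : 0 < RK := by rw [hRKdef]; linarith
  have hRK : ∀ i k, |A i k| ≤ RK := by
    intro i k
    have h1 : |A i k| ≤ ∑ k', |A i k'| :=
      Finset.single_le_sum (fun k' _ => abs_nonneg (A i k')) (Finset.mem_univ k)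
    have h2 : ∑ k', |A i k'| ≤ ∑ i', ∑ k', |A i' k'| :=
      Finset.single_le_sum (f := fun i' => ∑ k', |A i' k'|)
        (fun i' _ => Finset.sum_nonneg fun k' _ => abs_nonneg _) (Finset.mem_univ i)
    rw [hRKdef]; linarith
  set θ : ℝ := (δ/2) / (n * RK * RL + 1) with hθdef
  have hden : (0:ℝ) < n * RK * RL + 1 := by positivity
  have hθ : 0 < θ := by rw [hθdef]; positivity
  rw [Metric.mem_closure_iff] at hcc
  obtain ⟨y0, hy0mem, hy0dist⟩ := hcc θ hθ
  obtain ⟨x0, hx0C, hx0y⟩ := hy0mem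
  have hx0Φ : Φlm x0 = y0 := hx0y
  have hΦx0V : Φlm x0 ∈ V := LinearMap.mem_range_self _ _
  set es : V := ⟨c - Φlm x0, sub_mem hcV hΦx0V⟩ with hes
  have hesn : ‖(es : Fin p × Fin n → ℝ)‖ < θ := by
    show ‖c - Φlm x0‖ < θ
    rw [← dist_eq_norm, hx0Φ]
    exact hy0dist
  set x : Fin n → Z := x0 + Lin es with hx
  have hΦx : Φlm x = c := by
    rw [hx, map_add, hLin es]
    show Φlm x0 + (c - Φlm x0) = c
    abel
  refine ⟨x, ?_, ?_⟩
  · intro j k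
    exact congrFun hΦx (j, k)
  · intro i
    have hx0i : ‖∑ k, A i k • x0 k‖ ≤ 1 + δ/2 := hx0C i
    have hsplit : ∑ k, A i k • x k = (∑ k, A i k • x0 k) + ∑ k, A i k • (Lin es) k := by
      rw [← Finset.sum_add_distrib]
      refine Finset.sum_congr rfl fun k _ => ?_
      rw [hx]
      show A i k • (x0 k + Lin es k) = _
      rw [smul_add]
    have hLines : ∀ k, ‖(Lin es) k‖ ≤ RL * θ := by
      intro k
      calc ‖(Lin es) k‖ ≤ ‖Lin es‖ := norm_le_pi_norm _ k
        _ = ‖LinC es‖ := rfl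
        _ ≤ RL * ‖es‖ := LinC.le_opNorm es
        _ ≤ RL * θ := by
            apply mul_le_mul_of_nonneg_left _ hRL0
            rw [Submodule.coe_norm] at *
            exact le_of_lt hesn
    have hterm : ‖∑ k, A i k • (Lin es) k‖ ≤ n * (RK * (RL * θ)) := by
      calc ‖∑ k, A i k • (Lin es) k‖ ≤ ∑ k, ‖A i k • (Lin es) k‖ := norm_sum_le _ _
        _ ≤ ∑ _k : Fin n, RK * (RL * θ) := by
            refine Finset.sum_le_sum fun k _ => ?_
            rw [norm_smul, Real.norm_eq_abs]
            apply mul_le_mul (hRK i k) (hLines k) (norm_nonneg _) (le_of_lt hRK0)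
        _ = n * (RK * (RL * θ)) := by
            rw [Finset.sum_const, Finset.card_univ, Fintype.card_fin, nsmul_eq_mul]
    have hfin : (n:ℝ) * (RK * (RL * θ)) ≤ δ/2 := by
      have hnum : (n:ℝ) * RK * RL ≤ n * RK * RL + 1 := by linarith
      have h0 : (0:ℝ) ≤ (n:ℝ) * RK * RL := by positivity
      calc (n:ℝ) * (RK * (RL * θ)) = (n * RK * RL) * θ := by ring
        _ ≤ (n * RK * RL + 1) * θ := by
            apply mul_le_mul_of_nonneg_right hnum (le_of_lt hθ)
        _ = δ/2 := by rw [hθdef]; field_simp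
    calc ‖∑ k, A i k • x k‖
        ≤ ‖∑ k, A i k • x0 k‖ + ‖∑ k, A i k • (Lin es) k‖ := by
          rw [hsplit]; exact norm_add_le _ _
      _ ≤ (1 + δ/2) + n * (RK * (RL * θ)) := add_le_add hx0i hterm
      _ ≤ (1 + δ/2) + δ/2 := by linarith
      _ = 1 + δ := by ring



end LocalReflexivity

/-- Weak principle of local reflexivity: the bidual of `Z` is `(1+ε)`-finitely
representable in `Z`. -/
theorem finRep_bidual (Z : Type*) [NormedAddCommGroup Z] [NormedSpace ℝ Z] :
    FinRep (StrongDual ℝ (StrongDual ℝ Z)) Z := by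
  intro ε hε F hF
  haveI := hF
  rcases subsingleton_or_nontrivial F with hsub | hnt
  · refine ⟨0, fun x => ?_⟩
    have hx : x = 0 := Subsingleton.elim x 0
    subst hx
    simp
  · classical
    set δ : ℝ := min (ε/3) (1/8) with hδdef
    have hδ0 : 0 < δ := lt_min (by linarith) (by norm_num)
    have hδ8 : δ ≤ 1/8 := min_le_right _ _
    have hδε : 3*δ ≤ ε := by have := min_le_left (ε/3) (1/8:ℝ); linarith
    set n : ℕ := Module.finrank ℝ F with hn
    set b : Module.Basis (Fin n) ℝ F := Module.finBasis ℝ F with hb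
    set v : Fin n → StrongDual ℝ (StrongDual ℝ Z) := fun k => (b k : StrongDual ℝ (StrongDual ℝ Z)) with hv
    -- norming functionals from a δ-net of the sphere
    obtain ⟨p, w, hwmem, hwnet⟩ :=
      exists_net (Metric.sphere (0:F) 1) (isCompact_sphere _ _) hδ0
    have hwnorm : ∀ j, ‖(w j : StrongDual ℝ (StrongDual ℝ Z))‖ = 1 := by
      intro j
      have := hwmem j
      rw [mem_sphere_zero_iff_norm] at this
      rw [← Submodule.coe_norm, this]
    have hgex : ∀ j, ∃ gj : StrongDual ℝ Z, ‖gj‖ ≤ 1 ∧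
        1 - δ < (w j : StrongDual ℝ (StrongDual ℝ Z)) gj :=
      fun j => exists_norming _ (hwnorm j) hδ0 (by linarith)
    choose g hg1 hg2 using hgex
    -- coefficients description of the unit ball
    have hsumcoe : ∀ a : Fin n → ℝ,
        (((∑ k, a k • b k : F)) : StrongDual ℝ (StrongDual ℝ Z)) = ∑ k, a k • v k := by
      intro a
      rw [AddSubmonoidClass.coe_finset_sum]
      exact Finset.sum_congr rfl fun k _ => rfl
    set K : Set (Fin n → ℝ) := {a | ‖∑ k, a k • v k‖ ≤ 1} with hK
    have hKmem : ∀ f : F, ‖f‖ ≤ 1 → b.equivFun f ∈ K := by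
      intro f hf
      show ‖∑ k, b.equivFun f k • v k‖ ≤ 1
      rw [← hsumcoe, b.sum_equivFun f, ← Submodule.coe_norm]
      exact hf
    have hKcpt : IsCompact K := by
      have hKeq : K = (fun f : F => b.equivFun f) '' Metric.closedBall 0 1 := by
        ext a
        constructor
        · intro ha
          refine ⟨b.equivFun.symm a, ?_, ?_⟩
          · rw [Metric.mem_closedBall, dist_zero_right, Submodule.coe_norm]
            have : ((b.equivFun.symm a : F) : StrongDual ℝ (StrongDual ℝ Z)) = ∑ k, a k • v k := by
              rw [b.equivFun_symm_apply, hsumcoe]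
            rw [this]
            exact ha
          · exact b.equivFun.apply_symm_apply a
        · rintro ⟨f, hf, rfl⟩
          rw [Metric.mem_closedBall, dist_zero_right] at hf
          exact hKmem f hf
      rw [hKeq]
      refine (isCompact_closedBall _ _).image ?_
      exact (b.equivFun.toLinearMap.continuous_of_finiteDimensional)
    -- the coefficient net
    set BV : ℝ := (∑ k, ‖v k‖) + 1 with hBV
    have hBV1 : 1 ≤ BV := by
      rw [hBV]
      have : 0 ≤ ∑ k, ‖v k‖ := Finset.sum_nonneg fun k _ => norm_nonneg (v k)
      linarith
    have hBV0 : 0 < BV := by linarith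
    set θA : ℝ := δ / (2 * BV) with hθA
    have hθA0 : 0 < θA := by rw [hθA]; positivity
    obtain ⟨q0, a0, ha0mem, ha0net⟩ := exists_net K hKcpt hθA0
    -- coordinate test vectors
    have hvk0 : ∀ k, v k ≠ 0 := by
      intro k hk
      have : (b k : StrongDual ℝ (StrongDual ℝ Z)) = 0 := hk
      rw [Submodule.coe_eq_zero] at this
      exact b.ne_zero k this
    have hvknorm : ∀ k, 0 < ‖v k‖ := fun k =>
      (norm_pos_iff (E := StrongDual ℝ (StrongDual ℝ Z))).2 (hvk0 k)
    set κf : Fin n → (Fin n → ℝ) := fun k => Pi.single k (‖v k‖⁻¹) with hκf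
    have hκsum : ∀ k : Fin n, ∑ k', κf k k' • v k' = ‖v k‖⁻¹ • v k := by
      intro k
      rw [Finset.sum_eq_single k]
      · rw [hκf]
        show (Pi.single k (‖v k‖⁻¹) : Fin n → ℝ) k • v k = _
        rw [Pi.single_eq_same]
      · intro k' _ hk'
        rw [hκf]
        show (Pi.single k (‖v k‖⁻¹) : Fin n → ℝ) k' • v k' = 0
        rw [Pi.single_eq_of_ne hk', zero_smul]
      · intro hk; exact absurd (Finset.mem_univ k) hk
    have hκK : ∀ k, κf k ∈ K := by
      intro k
      show ‖∑ k', κf k k' • v k'‖ ≤ 1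
      rw [hκsum]; refine (ContinuousLinearMap.opNorm_smul_le _ (v k)).trans ?_; rw [norm_inv, Real.norm_of_nonneg (norm_nonneg (v k)), inv_mul_cancel₀ (hvknorm k).ne']
    set A : Fin (q0 + n) → Fin n → ℝ := Fin.append a0 κf with hA'
    have hAK : ∀ i, A i ∈ K := by
      intro i
      induction i using Fin.addCases with
      | left j => rw [hA', Fin.append_left]; exact ha0mem j
      | right k => rw [hA', Fin.append_right]; exact hκK k
    have hA : ∀ i, ‖∑ k, A i k • v k‖ ≤ 1 := fun i => hAK i
    -- the interpolation
    obtain ⟨x, hxg, hxA⟩ := lr_exists g v A hA hδ0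
    set T : F →ₗ[ℝ] Z := Module.Basis.constr b ℝ x with hT
    have hTapply : ∀ f : F, T f = ∑ k, b.equivFun f k • x k := by
      intro f
      rw [hT, Module.Basis.constr_apply_fintype]
    -- coordinate norm bounds
    have hxk : ∀ k, ‖x k‖ ≤ (1 + δ) * ‖v k‖ := by
      intro k
      have h1 := hxA (Fin.natAdd q0 k)
      have h2 : ∑ k', A (Fin.natAdd q0 k) k' • x k' = ‖v k‖⁻¹ • x k := by
        rw [hA']
        rw [Finset.sum_congr rfl (fun k' _ => by rw [Fin.append_right])]
        rw [Finset.sum_eq_single k]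
        · show (Pi.single k (‖v k‖⁻¹) : Fin n → ℝ) k • x k = _
          rw [Pi.single_eq_same]
        · intro k' _ hk'
          show (Pi.single k (‖v k‖⁻¹) : Fin n → ℝ) k' • x k' = 0
          rw [Pi.single_eq_of_ne hk', zero_smul]
        · intro hk; exact absurd (Finset.mem_univ k) hk
      rw [h2, norm_smul, norm_inv, Real.norm_of_nonneg (norm_nonneg (v k))] at h1
      have := hvknorm k
      rw [← le_div_iff₀' (by positivity : (0:ℝ) < ‖v k‖⁻¹)] at h1
      · calc ‖x k‖ ≤ (1 + δ) / ‖v k‖⁻¹ := h1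
          _ = (1 + δ) * ‖v k‖ := by field_simp
    -- upper bound on the sphere
    have hupper_sphere : ∀ f : F, ‖f‖ = 1 → ‖T f‖ ≤ 1 + 2*δ := by
      intro f hf
      set a : Fin n → ℝ := b.equivFun f with ha
      have haK : a ∈ K := hKmem f (le_of_eq hf)
      obtain ⟨i0, hi0⟩ := ha0net a haK
      have hfirst : ‖∑ k, a0 i0 k • x k‖ ≤ 1 + δ := by
        have h1 := hxA (Fin.castAdd n i0)
        rw [hA'] at h1
        rwa [Finset.sum_congr rfl (fun k' _ => by rw [Fin.append_left])] at h1
      have hsplit : ∑ k, a k • x k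
          = (∑ k, a0 i0 k • x k) + ∑ k, (a k - a0 i0 k) • x k := by
        rw [← Finset.sum_add_distrib]
        refine Finset.sum_congr rfl fun k _ => ?_
        rw [← add_smul]
        congr 1
        ring
      have hsecond : ‖∑ k, (a k - a0 i0 k) • x k‖ ≤ δ := by
        calc ‖∑ k, (a k - a0 i0 k) • x k‖ ≤ ∑ k, ‖(a k - a0 i0 k) • x k‖ :=
              norm_sum_le _ _
          _ ≤ ∑ k, θA * (2 * ‖v k‖) := by
              refine Finset.sum_le_sum fun k _ => ?_
              rw [norm_smul, Real.norm_eq_abs]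
              have hco : |a k - a0 i0 k| ≤ θA := by
                have h1 : |(a - a0 i0) k| ≤ ‖a - a0 i0‖ := by
                  have := norm_le_pi_norm (a - a0 i0) k
                  simpa using this
                have h2 : |(a - a0 i0) k| = |a k - a0 i0 k| := rfl
                rw [h2] at h1
                linarith [hi0]
              have hxk2 : ‖x k‖ ≤ 2 * ‖v k‖ := by
                have := hxk k
                nlinarith [hvknorm k]
              apply mul_le_mul hco hxk2 (norm_nonneg _) (le_of_lt hθA0)
          _ = θA * (2 * ∑ k, ‖v k‖) := by
              rw [← Finset.mul_sum, ← Finset.mul_sum]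
          _ ≤ θA * (2 * BV) := by
              apply mul_le_mul_of_nonneg_left _ (le_of_lt hθA0)
              rw [hBV]; linarith
          _ = δ := by rw [hθA]; field_simp
      rw [hTapply, ← ha, hsplit]
      calc ‖(∑ k, a0 i0 k • x k) + ∑ k, (a k - a0 i0 k) • x k‖
          ≤ ‖∑ k, a0 i0 k • x k‖ + ‖∑ k, (a k - a0 i0 k) • x k‖ := norm_add_le _ _
        _ ≤ (1 + δ) + δ := add_le_add hfirst hsecond
        _ = 1 + 2*δ := by ring
    have hupper : ∀ f : F, ‖T f‖ ≤ (1 + 2*δ) * ‖f‖ := by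
      intro f
      have := (bounds_of_sphere T (le_refl (0:ℝ))
        (fun f' hf' => ⟨norm_nonneg _, hupper_sphere f' hf'⟩) f).2
      exact this
    have hlower_sphere : ∀ f : F, ‖f‖ = 1 → 1 - 3*δ ≤ ‖T f‖ := by
      intro f hf
      obtain ⟨j, hj⟩ := hwnet f (by rwa [mem_sphere_zero_iff_norm])
      have hinterp : ∀ f' : F, g j (T f') = (f' : StrongDual ℝ (StrongDual ℝ Z)) (g j) := by
        intro f'
        rw [hTapply, map_sum]
        have h1 : ∀ k, g j (b.equivFun f' k • x k) = b.equivFun f' k * v k (g j) := by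
          intro k
          rw [map_smul, smul_eq_mul, hxg j k]
        rw [Finset.sum_congr rfl fun k _ => h1 k]
        have h2 : ((f' : StrongDual ℝ (StrongDual ℝ Z))) (g j) = (∑ k, b.equivFun f' k • v k) (g j) := by
          rw [← hsumcoe, b.sum_equivFun]
        rw [h2, ContinuousLinearMap.sum_apply]
        exact Finset.sum_congr rfl fun k _ => rfl
      have hTwj : 1 - δ < g j (T (w j)) := by rw [hinterp]; exact hg2 j
      have hdiffb : ‖T (f - w j)‖ ≤ (1 + 2*δ) * ‖f - w j‖ := hupper _
      have hjn : ‖f - w j‖ ≤ δ := le_of_lt hj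
      have hgTf : g j (T f) ≤ ‖T f‖ := by
        calc g j (T f) ≤ |g j (T f)| := le_abs_self _
          _ ≤ ‖g j‖ * ‖T f‖ := by
              have := (g j).le_opNorm (T f)
              rwa [Real.norm_eq_abs] at this
          _ ≤ 1 * ‖T f‖ := mul_le_mul_of_nonneg_right (hg1 j) (norm_nonneg _)
          _ = ‖T f‖ := one_mul _
      have hsplit2 : g j (T f) = g j (T (w j)) + g j (T (f - w j)) := by
        have hTeq : T f = T (w j) + T (f - w j) := by rw [map_sub]; abel
        rw [hTeq, map_add]
      have hlow2 : -((1 + 2*δ) * δ) ≤ g j (T (f - w j)) := by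
        have habs : |g j (T (f - w j))| ≤ ‖T (f - w j)‖ := by
          have h5 := (g j).le_opNorm (T (f - w j))
          rw [Real.norm_eq_abs] at h5
          have h6 : ‖g j‖ * ‖T (f - w j)‖ ≤ 1 * ‖T (f - w j)‖ :=
            mul_le_mul_of_nonneg_right (hg1 j) (norm_nonneg _)
          linarith
        have h7 : ‖T (f - w j)‖ ≤ (1 + 2*δ) * δ := by
          calc ‖T (f - w j)‖ ≤ (1 + 2*δ) * ‖f - w j‖ := hdiffb
            _ ≤ (1 + 2*δ) * δ := by
                apply mul_le_mul_of_nonneg_left hjn (by linarith)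
        have := abs_le.1 habs
        linarith
      have hchain : 1 - δ - (1 + 2*δ) * δ ≤ ‖T f‖ := by
        rw [hsplit2] at hgTf
        linarith
      nlinarith
    have hbnds := fun f => bounds_of_sphere T (show (0:ℝ) ≤ 1 - 3*δ by linarith)
      (fun f' hf' => ⟨hlower_sphere f' hf', hupper_sphere f' hf'⟩) f
    refine ⟨T, fun f => ?_⟩
    obtain ⟨h1, h2⟩ := hbnds f
    have hf0 := norm_nonneg f
    constructor
    · calc (1-ε)*‖f‖ ≤ (1-3*δ)*‖f‖ := by nlinarith
        _ ≤ ‖T f‖ := h1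
    · calc ‖T f‖ ≤ (1+2*δ)*‖f‖ := h2
        _ ≤ (1+ε)*‖f‖ := by nlinarith

section Main

set_option maxHeartbeats 1000000

variable {R : Type u} [NormedAddCommGroup R] [NormedSpace ℝ R] [CompleteSpace R]
    (space : Ordinal.{0} → Type u)
    [∀ α, NormedAddCommGroup (space α)] [∀ α, NormedSpace ℝ (space α)]
    [∀ α, CompleteSpace (space α)]
    (zeroEquiv : space 0 ≃ₗᵢ[ℝ] R)
    (succEquiv : ∀ α, space (α + 1) ≃ₗᵢ[ℝ] StrongDual ℝ (space α))
    (incl : ∀ β γ, β < γ → IsEvenOrdinal β → IsEvenOrdinal γ → (space β →ₗᵢ[ℝ] space γ))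

theorem key_induction
    (hsys : IsTransfiniteDualSystem R space zeroEquiv succEquiv incl) :
    ∀ β : Ordinal.{0}, IsEvenOrdinal β → FinRep (StrongDual ℝ (space β)) (StrongDual ℝ R) := by
  intro β
  induction β using Ordinal.induction with
  | _ β IH =>
    intro hβ
    rcases isEven_cases hβ with rfl | hlim | ⟨γ, hγe, hγlt, rfl⟩
    · exact finRep_of_isometric (dualCongrMap zeroEquiv) (norm_dualCongrMap _)
    · -- limit case
      intro ε hε F hF
      haveI := hF
      set δ : ℝ := min (ε / 3) (1 / 2) with hδdef
      have hδ : 0 < δ := lt_min (by linarith) (by norm_num)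
      have hδhalf : δ ≤ 1/2 := min_le_right _ _
      have hδε : 3 * δ ≤ ε := by have := min_le_left (ε / 3) (1/2 : ℝ); linarith
      have hdense := hsys.2.2 β hlim hβ
      -- a δ/4-net of the unit sphere of F
      obtain ⟨p, w, hwmem, hwnet⟩ :=
        exists_net (Metric.sphere (0:F) 1) (isCompact_sphere _ _)
          (show (0:ℝ) < δ/4 by linarith)
      have hwnorm : ∀ j, ‖(w j : StrongDual ℝ (space β))‖ = 1 := by
        intro j
        have := hwmem j
        rw [mem_sphere_zero_iff_norm] at this
        rw [← Submodule.coe_norm, this]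
      -- near-norming elements in the dense union
      have hchoice : ∀ j : Fin p, ∃ (o : Ordinal.{0}) (ho : o < β) (hoe : IsEvenOrdinal o)
          (y : space o), ‖incl o β ho hoe hβ y‖ ≤ 1 + δ/4 ∧
            1 - δ/2 ≤ (w j : StrongDual ℝ (space β)) (incl o β ho hoe hβ y) := by
        intro j
        obtain ⟨z, hz1, hz2⟩ := exists_norming (w j : StrongDual ℝ (space β)) (hwnorm j)
          (show (0:ℝ) < δ/4 by linarith) (by linarith)
        have hzc := hdense z
        rw [Metric.mem_closure_iff] at hzc
        obtain ⟨z', hz'mem, hz'dist⟩ := hzc (δ/4) (by linarith)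
        simp only [Set.mem_iUnion] at hz'mem
        obtain ⟨o, ho, hoe, y, hy⟩ := hz'mem
        refine ⟨o, ho, hoe, y, ?_, ?_⟩
        · rw [hy]
          have hd : ‖z - z'‖ < δ/4 := by rw [← dist_eq_norm]; exact hz'dist
          have h5 : ‖z'‖ - ‖z‖ ≤ ‖z' - z‖ := norm_sub_norm_le z' z
          have h6 : ‖z' - z‖ = ‖z - z'‖ := norm_sub_rev _ _
          linarith
        · rw [hy]
          have hdiff : ((w j : StrongDual ℝ (space β)) z' : ℝ) ≥
              (w j : StrongDual ℝ (space β)) z - ‖(w j : StrongDual ℝ (space β))‖ * ‖z - z'‖ := by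
            have h1 : (w j : StrongDual ℝ (space β)) z - (w j : StrongDual ℝ (space β)) z'
                = (w j : StrongDual ℝ (space β)) (z - z') := by rw [map_sub]
            have h2 : ‖(w j : StrongDual ℝ (space β)) (z - z')‖
                ≤ ‖(w j : StrongDual ℝ (space β))‖ * ‖z - z'‖ :=
              ContinuousLinearMap.le_opNorm _ _
            rw [Real.norm_eq_abs] at h2
            have := abs_le.1 h2
            linarith [this.2, h1 ▸ this.2]
          have hzz' : ‖z - z'‖ ≤ δ/4 := by
            have hd : ‖z - z'‖ < δ/4 := by rw [← dist_eq_norm]; exact hz'dist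
            linarith
          rw [hwnorm j] at hdiff
          linarith
      choose of holt hoe yf hyn hyval using hchoice
      -- upper bound ordinal
      classical
      set s : Finset Ordinal.{0} := insert 0 (Finset.univ.image of) with hs
      have hsne : s.Nonempty := ⟨0, Finset.mem_insert_self _ _⟩
      set γ0 : Ordinal.{0} := s.max' hsne with hγ0
      have hγ0mem : γ0 ∈ s := s.max'_mem hsne
      have hγ0lt : γ0 < β := by
        rcases Finset.mem_insert.1 hγ0mem with h | h
        · rw [h]; exact hlim.pos
        · obtain ⟨j, _, hj⟩ := Finset.mem_image.1 h
          rw [← hj]; exact holt j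
      have hγ0e : IsEvenOrdinal γ0 := by
        rcases Finset.mem_insert.1 hγ0mem with h | h
        · rw [h]; exact isEven_zero
        · obtain ⟨j, _, hj⟩ := Finset.mem_image.1 h
          rw [← hj]; exact hoe j
      -- use Γ := γ0 + 1 + 1 so that every of j < Γ strictly
      set Γ : Ordinal.{0} := γ0 + 1 + 1 with hΓ
      have hΓe : IsEvenOrdinal Γ := isEven_succ_succ hγ0e
      have hΓlt : Γ < β := hlim.succ_lt (hlim.succ_lt hγ0lt)
      have hofltΓ : ∀ j, of j < Γ := by
        intro j
        have h1 : of j ≤ γ0 := by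
          apply Finset.le_max'
          exact Finset.mem_insert_of_mem (Finset.mem_image_of_mem of (Finset.mem_univ j))
        calc of j ≤ γ0 := h1
          _ < γ0 + 1 := lt_add_of_pos_right _ (by norm_num)
          _ < Γ := by rw [hΓ]; exact lt_add_of_pos_right _ (by norm_num)
      -- the restriction operator
      set ι := (incl Γ β hΓlt hΓe hβ).toContinuousLinearMap with hι
      have hιnorm : ∀ u, ‖ι u‖ = ‖u‖ := fun u => (incl Γ β hΓlt hΓe hβ).norm_map u
      set T : F →ₗ[ℝ] StrongDual ℝ (space Γ) :=
        { toFun := fun f => (f : StrongDual ℝ (space β)).comp ι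
          map_add' := by
            intro f g
            ext u
            simp [ContinuousLinearMap.comp_apply]
          map_smul' := by
            intro c f
            ext u
            simp [ContinuousLinearMap.comp_apply] } with hT
      -- upper bound
      have hub : ∀ f : F, ‖T f‖ ≤ ‖f‖ := by
        intro f
        apply ContinuousLinearMap.opNorm_le_bound _ (norm_nonneg f)
        intro u
        have h1 : T f u = (f : StrongDual ℝ (space β)) (ι u) := rfl
        rw [h1]
        calc ‖(f : StrongDual ℝ (space β)) (ι u)‖ ≤ ‖(f : StrongDual ℝ (space β))‖ * ‖ι u‖ :=
              ContinuousLinearMap.le_opNorm _ _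
          _ = ‖f‖ * ‖u‖ := by rw [← Submodule.coe_norm, hιnorm]
      -- witnesses in space Γ
      have hwitness : ∀ j : Fin p, ∃ u : space Γ,
          ι u = incl (of j) β (holt j) (hoe j) hβ (yf j) ∧ ‖u‖ ≤ 1 + δ/4 := by
        intro j
        refine ⟨incl (of j) Γ (hofltΓ j) (hoe j) hΓe (yf j), ?_, ?_⟩
        · have := hsys.1 (of j) Γ β (hofltΓ j) hΓlt (hoe j) hΓe hβ (yf j)
          rw [hι]
          simpa using this
        · have h2 : ‖incl (of j) Γ (hofltΓ j) (hoe j) hΓe (yf j)‖ = ‖yf j‖ :=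
            (incl (of j) Γ (hofltΓ j) (hoe j) hΓe).norm_map (yf j)
          have h3 : ‖incl (of j) β (holt j) (hoe j) hβ (yf j)‖ = ‖yf j‖ :=
            (incl (of j) β (holt j) (hoe j) hβ).norm_map (yf j)
          rw [h2, ← h3]
          exact hyn j
      choose uf huf hufn using hwitness
      -- lower bound on the sphere
      have hlb : ∀ f : F, ‖f‖ = 1 → 1 - 2*δ ≤ ‖T f‖ ∧ ‖T f‖ ≤ 1 := by
        intro f hf
        refine ⟨?_, le_trans (hub f) (le_of_eq hf)⟩
        obtain ⟨j, hj⟩ := hwnet f (by rwa [mem_sphere_zero_iff_norm])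
        have hval : (1:ℝ) - δ ≤ T f (uf j) := by
          have h1 : T f (uf j) = (f : StrongDual ℝ (space β)) (incl (of j) β (holt j) (hoe j) hβ (yf j)) := by
            have : T f (uf j) = (f : StrongDual ℝ (space β)) (ι (uf j)) := rfl
            rw [this, huf j]
          set z' := incl (of j) β (holt j) (hoe j) hβ (yf j) with hz'
          have h2 : (f : StrongDual ℝ (space β)) z' =
              (w j : StrongDual ℝ (space β)) z' + ((f - w j : F) : StrongDual ℝ (space β)) z' := by
            have : ((f - w j : F) : StrongDual ℝ (space β)) = (f : StrongDual ℝ (space β)) - w j := rfl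
            rw [this]; simp
          have h3 : |((f - w j : F) : StrongDual ℝ (space β)) z'| ≤ (δ/4) * (1 + δ/4) := by
            have hb1 : ‖((f - w j : F) : StrongDual ℝ (space β))‖ ≤ δ/4 := by
              rw [← Submodule.coe_norm]
              exact le_of_lt (hj)
            have hb2 := ContinuousLinearMap.le_opNorm
              ((f - w j : F) : StrongDual ℝ (space β)) z'
            rw [Real.norm_eq_abs] at hb2
            calc |((f - w j : F) : StrongDual ℝ (space β)) z'|
                ≤ ‖((f - w j : F) : StrongDual ℝ (space β))‖ * ‖z'‖ := hb2
              _ ≤ (δ/4) * (1 + δ/4) := by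
                  apply mul_le_mul hb1 (hyn j) (norm_nonneg _) (by linarith)
          have h4 := hyval j
          rw [h1, h2]
          have := abs_le.1 h3
          nlinarith
        have hu : ‖uf j‖ ≤ 1 + δ/4 := hufn j
        have h5 : T f (uf j) ≤ ‖T f‖ * ‖uf j‖ :=
          le_trans (le_abs_self _) (by
            have := ContinuousLinearMap.le_opNorm (T f) (uf j)
            rwa [Real.norm_eq_abs] at this)
        have h6 : (0:ℝ) ≤ ‖T f‖ := norm_nonneg _
        nlinarith
      -- assemble: bounds everywhere, then compose with IH
      have hbnds : ∀ f : F, (1 - 2*δ) * ‖f‖ ≤ ‖T f‖ ∧ ‖T f‖ ≤ 1 * ‖f‖ :=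
        bounds_of_sphere T (by linarith)
          (fun f hf => ⟨(hlb f hf).1, (hlb f hf).2⟩)
      obtain ⟨T', hT'⟩ := exists_comp T (IH Γ hΓlt hΓe) (show (0:ℝ) ≤ 1 - 2*δ by linarith)
        hδ (by linarith) hbnds
      refine ⟨T', fun x => ?_⟩
      obtain ⟨ha, hb⟩ := hT' x
      have hx0 := norm_nonneg x
      constructor
      · calc (1 - ε) * ‖x‖ ≤ (1 - δ) * (1 - 2*δ) * ‖x‖ := by
              nlinarith [mul_nonneg (show (0:ℝ) ≤ ε - 3*δ by linarith) hx0,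
                mul_nonneg (mul_nonneg hδ.le hδ.le) hx0]
          _ ≤ ‖T' x‖ := ha
      · calc ‖T' x‖ ≤ (1 + δ) * 1 * ‖x‖ := hb
          _ ≤ (1 + ε) * ‖x‖ := by nlinarith
    · -- successor-successor case
      have h1 : FinRep (StrongDual ℝ (space (γ+1+1))) (StrongDual ℝ (StrongDual ℝ (space (γ+1)))) :=
        finRep_of_isometric (dualCongrMap (succEquiv (γ+1))) (norm_dualCongrMap _)
      have h2 : FinRep (StrongDual ℝ (StrongDual ℝ (space (γ+1)))) (space (γ+1)) := finRep_bidual _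
      have h3 : FinRep (space (γ+1)) (StrongDual ℝ (space γ)) :=
        finRep_of_isometric (succEquiv γ).toLinearEquiv.toLinearMap
          (fun x => (succEquiv γ).norm_map x)
      exact ((h1.trans h2).trans h3).trans (IH γ hγlt hγe)

end Main

/-- If `R*` is isomorphic to a Banach space `E`, then the transfinite dual `R^(ω²+1)` is
crudely finitely representable in `E`. -/
theorem statement4 {R : Type u} [NormedAddCommGroup R] [NormedSpace ℝ R] [CompleteSpace R]
    (space : Ordinal.{0} → Type u)
    [∀ α, NormedAddCommGroup (space α)] [∀ α, NormedSpace ℝ (space α)]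
    [∀ α, CompleteSpace (space α)]
    (zeroEquiv : space 0 ≃ₗᵢ[ℝ] R)
    (succEquiv : ∀ α, space (α + 1) ≃ₗᵢ[ℝ] StrongDual ℝ (space α))
    (incl : ∀ β γ, β < γ → IsEvenOrdinal β → IsEvenOrdinal γ → (space β →ₗᵢ[ℝ] space γ))
    (hsys : IsTransfiniteDualSystem R space zeroEquiv succEquiv incl)
    {E : Type v} [NormedAddCommGroup E] [NormedSpace ℝ E] [CompleteSpace E]
    (iso : StrongDual ℝ R ≃L[ℝ] E) :
    CrudelyFinitelyRepresentable (space (Ordinal.omega0 * Ordinal.omega0 + 1)) E := by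
  classical
  have hω2lim : Order.IsSuccLimit (Ordinal.omega0 * Ordinal.omega0) :=
    Ordinal.isSuccLimit_mul_right Ordinal.omega0_pos Ordinal.isSuccLimit_omega0
  have hω2e : IsEvenOrdinal (Ordinal.omega0 * Ordinal.omega0) := isEven_of_limit hω2lim
  have hQ : FinRep (StrongDual ℝ (space (Ordinal.omega0 * Ordinal.omega0))) (StrongDual ℝ R) :=
    key_induction space zeroEquiv succEquiv incl hsys _ hω2e
  have h0 : FinRep (space (Ordinal.omega0 * Ordinal.omega0 + 1))
      (StrongDual ℝ (space (Ordinal.omega0 * Ordinal.omega0))) :=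
    finRep_of_isometric (succEquiv (Ordinal.omega0 * Ordinal.omega0)).toLinearEquiv.toLinearMap
      (fun x => (succEquiv (Ordinal.omega0 * Ordinal.omega0)).norm_map x)
  have hFR : FinRep (space (Ordinal.omega0 * Ordinal.omega0 + 1)) (StrongDual ℝ R) := h0.trans hQ
  set K1 : ℝ := ‖(iso : StrongDual ℝ R →L[ℝ] E)‖ with hK1
  set K2 : ℝ := ‖(iso.symm : E →L[ℝ] StrongDual ℝ R)‖ with hK2
  have hK1n : 0 ≤ K1 := norm_nonneg (iso : StrongDual ℝ R →L[ℝ] E)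
  have hK2n : 0 ≤ K2 := norm_nonneg (iso.symm : E →L[ℝ] StrongDual ℝ R)
  refine ⟨3 * (K1 + 1) * (K2 + 1), by nlinarith, ?_⟩
  intro F hF
  obtain ⟨T, hT⟩ := hFR (1/2) (by norm_num) F hF
  refine ⟨(2 * (K2 + 1)) • ((iso : StrongDual ℝ R →L[ℝ] E).toLinearMap.comp T), fun x => ?_⟩
  obtain ⟨h1, h2⟩ := hT x
  have happ : ((2 * (K2 + 1)) • ((iso : StrongDual ℝ R →L[ℝ] E).toLinearMap.comp T)) x
      = (2 * (K2 + 1)) • (iso (T x)) := rfl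
  have hnorm : ‖((2 * (K2 + 1)) • ((iso : StrongDual ℝ R →L[ℝ] E).toLinearMap.comp T)) x‖
      = (2 * (K2 + 1)) * ‖iso (T x)‖ := by
    rw [happ, norm_smul, Real.norm_eq_abs, abs_of_pos (by linarith)]
  have hlow : ‖T x‖ ≤ K2 * ‖iso (T x)‖ := by
    have hs : iso.symm (iso (T x)) = T x := iso.symm_apply_apply _
    calc ‖T x‖ = ‖(iso.symm : E →L[ℝ] StrongDual ℝ R) (iso (T x))‖ := by
          rw [show ((iso.symm : E →L[ℝ] StrongDual ℝ R) (iso (T x))) = iso.symm (iso (T x)) from rfl,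
            hs]
      _ ≤ K2 * ‖iso (T x)‖ := ContinuousLinearMap.le_opNorm _ _
  have hup : ‖iso (T x)‖ ≤ K1 * ‖T x‖ := by
    have : ‖(iso : StrongDual ℝ R →L[ℝ] E) (T x)‖ ≤ K1 * ‖T x‖ := ContinuousLinearMap.le_opNorm _ _
    exact this
  have hTx0 : (0:ℝ) ≤ ‖T x‖ := norm_nonneg _
  have hiTx0 : (0:ℝ) ≤ ‖iso (T x)‖ := norm_nonneg _
  have hx0 : (0:ℝ) ≤ ‖x‖ := norm_nonneg _
  rw [hnorm]
  have g2 : ‖T x‖ ≤ (K2 + 1) * ‖iso (T x)‖ := by nlinarith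
  have e1 : K1 * ‖T x‖ ≤ K1 * ((3/2) * ‖x‖) := by
    apply mul_le_mul_of_nonneg_left _ hK1n
    linarith
  have e2 : (K2 + 1) * ‖iso (T x)‖ ≤ (K2 + 1) * (K1 * ((3/2) * ‖x‖)) := by
    apply mul_le_mul_of_nonneg_left _ (by linarith : (0:ℝ) ≤ K2 + 1)
    linarith
  have e3 : (0:ℝ) ≤ (K2 + 1) * ‖x‖ := mul_nonneg (by linarith) hx0
  constructor
  · nlinarith
  · nlinarith [e2, e3]
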